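/- arXiv:2307.16702 — 3 statements merged into one kernel-verified Lean document; each statement's English description precedes it below -/
import Mathlib

section
/- Let A be an m×n real matrix, b ∈ ℝ^m, and suppose the linear system Ax = b is consistent. Then for any matrix S ∈ ℝ^{m×q} and any vector x̃ ∈ ℝ^n, we have Aᵀ S Sᵀ (A x̃ − b) ≠ 0 if and only if Sᵀ (A x̃ − b) ≠ 0. -/
theorem stmt0 {m n q : ℕ} (A : Matrix (Fin m) (Fin n) ℝ) (b : Fin m → ℝ)
    (hcons : ∃ x : Fin n → ℝ, A.mulVec x = b)
    (S : Matrix (Fin m) (Fin q) ℝ) (xt : Fin n → ℝ) :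
    A.transpose.mulVec ((S * S.transpose).mulVec (A.mulVec xt - b)) ≠ 0 ↔
      S.transpose.mulVec (A.mulVec xt - b) ≠ 0 := by
  obtain ⟨x, hx⟩ := hcons
  set r := A.mulVec xt - b with hr
  have hrA : r = A.mulVec (xt - x) := by
    rw [Matrix.mulVec_sub, hx, hr]
  have hsplit : (S * S.transpose).mulVec r = S.mulVec (S.transpose.mulVec r) :=
    (Matrix.mulVec_mulVec _ _ _).symm
  constructor
  · intro h hc
    apply h
    rw [hsplit, hc, Matrix.mulVec_zero, Matrix.mulVec_zero]
  · intro hS h0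
    apply hS
    have key : dotProduct (S.transpose.mulVec r) (S.transpose.mulVec r) = 0 := by
      have h1 : dotProduct (xt - x) (A.transpose.mulVec ((S * S.transpose).mulVec r)) = 0 := by
        rw [h0, dotProduct_zero]
      rw [Matrix.dotProduct_mulVec, ← Matrix.mulVec_transpose, Matrix.transpose_transpose,
        ← hrA, hsplit, Matrix.dotProduct_mulVec, ← Matrix.mulVec_transpose] at h1
      exact h1
    exact dotProduct_self_eq_zero.mp key
end

section
/- Let S be an ℝⁿ-valued random variable on a probability space with E[S Sᵀ] = D positive definite. Then E[ S Sᵀ / ‖S‖²₂ ] (with the convention 0/0 = 0) is also positive definite. -/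
open Matrix MeasureTheory

theorem stmt7 {n : ℕ} {Ω : Type*} [MeasureSpace Ω] [IsProbabilityMeasure (volume : Measure Ω)]
    (S : Ω → Fin n → ℝ) (hmeas : Measurable S)
    (hint : ∀ v : Fin n → ℝ, Integrable (fun ω => (S ω ⬝ᵥ v) ^ 2) volume)
    (hpd : ∀ v : Fin n → ℝ, v ≠ 0 → 0 < ∫ ω, (S ω ⬝ᵥ v) ^ 2) :
    ∀ v : Fin n → ℝ, v ≠ 0 → 0 < ∫ ω, (S ω ⬝ᵥ v) ^ 2 / (S ω ⬝ᵥ S ω) := by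
  intro v hv
  set f : Ω → ℝ := fun ω => (S ω ⬝ᵥ v) ^ 2 with hf
  set g : Ω → ℝ := fun ω => (S ω ⬝ᵥ v) ^ 2 / (S ω ⬝ᵥ S ω) with hg
  have hSS : ∀ ω, 0 ≤ S ω ⬝ᵥ S ω := fun ω =>
    Finset.sum_nonneg fun i _ => mul_self_nonneg _
  have hg_nonneg : ∀ ω, 0 ≤ g ω := fun ω => div_nonneg (sq_nonneg _) (hSS ω)
  have hCS : ∀ ω, f ω ≤ (S ω ⬝ᵥ S ω) * (v ⬝ᵥ v) := by
    intro ω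
    have := Finset.sum_mul_sq_le_sq_mul_sq Finset.univ (S ω) v
    simpa [f, dotProduct, sq] using this
  have hbound : ∀ ω, g ω ≤ v ⬝ᵥ v := by
    intro ω
    rcases eq_or_lt_of_le (hSS ω) with h | h
    · simp only [g, ← h, div_zero]
      exact Finset.sum_nonneg fun i _ => mul_self_nonneg _
    · rw [div_le_iff₀ h]
      calc f ω ≤ (S ω ⬝ᵥ S ω) * (v ⬝ᵥ v) := hCS ω
        _ = v ⬝ᵥ v * (S ω ⬝ᵥ S ω) := mul_comm _ _
  have hm1 : Measurable fun ω => S ω ⬝ᵥ v := by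
    simp only [dotProduct]
    exact Finset.measurable_sum _ fun i _ => ((measurable_pi_apply i).comp hmeas).mul_const _
  have hm2 : Measurable fun ω => S ω ⬝ᵥ S ω := by
    simp only [dotProduct]
    exact Finset.measurable_sum _ fun i _ =>
      ((measurable_pi_apply i).comp hmeas).mul ((measurable_pi_apply i).comp hmeas)
  have hmg : Measurable g := (hm1.pow_const 2).div hm2
  have hig : Integrable g volume := by
    refine (integrable_const (v ⬝ᵥ v)).mono' hmg.aestronglyMeasurable ?_
    filter_upwards with ω
    rw [Real.norm_eq_abs, abs_of_nonneg (hg_nonneg ω)]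
    exact hbound ω
  have hsupf : 0 < volume (Function.support f) :=
    (integral_pos_iff_support_of_nonneg (fun ω => sq_nonneg _) (hint v)).mp (hpd v hv)
  have hsub : Function.support f ⊆ Function.support g := by
    intro ω hω
    have hfω : f ω ≠ 0 := hω
    have hSv : S ω ⬝ᵥ v ≠ 0 := fun h => hfω (by simp [f, h])
    have hSSpos : 0 < S ω ⬝ᵥ S ω := by
      rcases (hSS ω).lt_or_eq with h | h
      · exact h
      · exfalso
        have hz : ∀ i ∈ Finset.univ, S ω i * S ω i = 0 :=
          (Finset.sum_eq_zero_iff_of_nonneg fun i _ => mul_self_nonneg _).mp h.symm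
        apply hSv
        simp only [dotProduct]
        refine Finset.sum_eq_zero fun i _ => ?_
        have := hz i (Finset.mem_univ i)
        have : S ω i = 0 := by nlinarith
        simp [this]
    have : 0 < g ω := div_pos (by positivity) hSSpos
    exact ne_of_gt this
  have hsupg : 0 < volume (Function.support g) :=
    lt_of_lt_of_le hsupf (measure_mono hsub)
  exact (integral_pos_iff_support_of_nonneg hg_nonneg hig).mpr hsupg
end

section
/- Let f : ℝⁿ → ℝ be γ-strongly convex with differentiable conjugate f*, let A ∈ ℝ^{m×n}, b = Ax̂. Given z^k with x^k = ∇f*(z^k), a matrix S ∈ ℝ^{m×q} with Sᵀ(Ax^k − b) ≠ 0, step-size α = (2 − ζ)·γ‖Sᵀ(Ax^k − b)‖²/‖Aᵀ S Sᵀ(Ax^k − b)‖² with ζ ∈ (0,2), and the update z^{k+1} = z^k − α Aᵀ S Sᵀ(Ax^k − b), x^{k+1} = ∇f*(z^{k+1}), the Bregman distances satisfy: D_{f,z^{k+1}}(x^{k+1}, x̂) ≤ D_{f,z^k}(x^k, x̂) − (ζ(2−ζ)/2)·(γ‖Sᵀ(Ax^k − b)‖⁴₂/‖Aᵀ S Sᵀ(Ax^k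 − b)‖²₂)·(1/‖Sᵀ(Ax^k − b)‖²₂)·‖Sᵀ(Ax^k − b)‖²₂, i.e. the decrease is (ζ(2−ζ)/2)·L·‖Sᵀ(Ax^k − b)‖²₂ with L = γ‖Sᵀ(Ax^k−b)‖²/‖AᵀSSᵀ(Ax^k−b)‖². -/
open Matrix

private lemma dot_self_nonneg {k : ℕ} (v : Fin k → ℝ) : 0 ≤ v ⬝ᵥ v :=
  Finset.sum_nonneg fun i _ => mul_self_nonneg (v i)

theorem stmt9 {m n q : ℕ} (f : (Fin n → ℝ) → ℝ) (γ : ℝ) (hγ : 0 < γ)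
    (hsc : ∀ x y z : Fin n → ℝ, (∀ v, f v ≥ f x + z ⬝ᵥ (v - x)) →
      f y ≥ f x + z ⬝ᵥ (y - x) + γ / 2 * ((y - x) ⬝ᵥ (y - x)))
    (A : Matrix (Fin m) (Fin n) ℝ) (b : Fin m → ℝ) (xhat : Fin n → ℝ)
    (hb : A.mulVec xhat = b)
    (zk xk : Fin n → ℝ) (hxk : ∀ v, f v ≥ f xk + zk ⬝ᵥ (v - xk))
    (S : Matrix (Fin m) (Fin q) ℝ)
    (r : Fin m → ℝ) (hr : r = A.mulVec xk - b)
    (hS : S.transpose.mulVec r ≠ 0)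
    (ζ : ℝ) (hζ : ζ ∈ Set.Ioo (0 : ℝ) 2)
    (L α : ℝ)
    (hL : L = γ * (S.transpose.mulVec r ⬝ᵥ S.transpose.mulVec r) /
      (A.transpose.mulVec ((S * S.transpose).mulVec r) ⬝ᵥ
        A.transpose.mulVec ((S * S.transpose).mulVec r)))
    (hα : α = (2 - ζ) * L)
    (zk1 xk1 : Fin n → ℝ)
    (hz : zk1 = zk - α • A.transpose.mulVec ((S * S.transpose).mulVec r))
    (hx1 : ∀ v, f v ≥ f xk1 + zk1 ⬝ᵥ (v - xk1)) :
    f xhat - f xk1 - zk1 ⬝ᵥ (xhat - xk1) ≤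
      f xhat - f xk - zk ⬝ᵥ (xhat - xk) -
        ζ * (2 - ζ) / 2 * L * (S.transpose.mulVec r ⬝ᵥ S.transpose.mulVec r) := by
  obtain ⟨hζ0, hζ2⟩ := hζ
  set s : Fin q → ℝ := S.transpose.mulVec r with hs
  set u : Fin n → ℝ := A.transpose.mulVec ((S * S.transpose).mulVec r) with hu
  set d : Fin n → ℝ := xk1 - xk with hd
  have hss : 0 < s ⬝ᵥ s := by
    rcases lt_or_eq_of_le (dot_self_nonneg s) with h | h
    · exact h
    · exact absurd (dotProduct_self_eq_zero.mp h.symm) hS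
  have hux : u ⬝ᵥ (xhat - xk) = -(s ⬝ᵥ s) := by
    have h1 : A.mulVec (xhat - xk) = -r := by
      rw [Matrix.mulVec_sub, hb, hr]; abel
    rw [hu, Matrix.mulVec_transpose, ← Matrix.dotProduct_mulVec, h1, dotProduct_neg,
      ← Matrix.mulVec_mulVec, ← Matrix.vecMul_transpose, ← Matrix.dotProduct_mulVec]
  have hstrong := hsc xk xk1 zk hxk
  have hzdot : ∀ w, zk1 ⬝ᵥ w = zk ⬝ᵥ w - α * (u ⬝ᵥ w) := by
    intro w
    rw [hz, sub_dotProduct, smul_dotProduct, smul_eq_mul]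
  have hquad : 0 ≤ γ / 2 * (d ⬝ᵥ d) + α * (u ⬝ᵥ d) + α ^ 2 / (2 * γ) * (u ⬝ᵥ u) := by
    have h0 : 0 ≤ (γ • d + α • u) ⬝ᵥ (γ • d + α • u) := dot_self_nonneg _
    have hdu : d ⬝ᵥ u = u ⬝ᵥ d := dotProduct_comm d u
    have heq : γ / 2 * (d ⬝ᵥ d) + α * (u ⬝ᵥ d) + α ^ 2 / (2 * γ) * (u ⬝ᵥ u) =
        (1 / (2 * γ)) * ((γ • d + α • u) ⬝ᵥ (γ • d + α • u)) := by
      simp only [add_dotProduct, dotProduct_add, smul_dotProduct,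
        dotProduct_smul, smul_eq_mul, hdu]
      field_simp
      ring
    rw [heq]
    exact mul_nonneg (by positivity) h0
  have hkey : α * (s ⬝ᵥ s) - α ^ 2 / (2 * γ) * (u ⬝ᵥ u) =
      ζ * (2 - ζ) / 2 * L * (s ⬝ᵥ s) := by
    rcases eq_or_lt_of_le (dot_self_nonneg u) with h | h
    · have hL0 : L = 0 := by rw [hL, ← h, div_zero]
      rw [hα, hL0]
      ring
    · rw [hα, hL]
      have hne : u ⬝ᵥ u ≠ 0 := ne_of_gt h
      field_simp
      ring
  have hud : u ⬝ᵥ (xhat - xk1) = -(s ⬝ᵥ s) - u ⬝ᵥ d := by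
    have hw : (xhat - xk1 : Fin n → ℝ) = (xhat - xk) - d := by rw [hd]; abel
    rw [hw, dotProduct_sub, hux]
  have hzk : zk ⬝ᵥ (xhat - xk1) = zk ⬝ᵥ (xhat - xk) - zk ⬝ᵥ d := by
    have hw : (xhat - xk1 : Fin n → ℝ) = (xhat - xk) - d := by rw [hd]; abel
    rw [hw, dotProduct_sub]
  rw [hzdot (xhat - xk1), hud, hzk]
  nlinarith [hquad, hkey, hstrong]
end
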